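/- Let $u$ be a psh germ at $0 \in \mathbb{C}^n$ and $\varphi$ a maximal psh weight (a psh germ with isolated singularity at $0$, $e^\varphi$ continuous, and $(dd^c\varphi)^n = \lambda\delta_0$ for some $\lambda > 0$). Then the relative type $\sigma(u,\varphi) = \sup\{c \ge 0 : u \le c\varphi + O(1)\}$ is finite and the supremum is attained: $u \le \sigma(u,\varphi)\,\varphi + O(1)$. -/

import Mathlib

open MeasureTheory

set_option maxHeartbeats 1000000

/-- Plurisubharmonicity (see `stmt_12`). -/
def IsPSHOn {n : ℕ} (u : (Fin n → ℂ) → EReal) (Ω : Set (Fin n → ℂ)) : Prop :=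
  UpperSemicontinuousOn u Ω ∧
    ∀ a ∈ Ω, ∀ b : Fin n → ℂ,
      (∀ t : ℂ, ‖t‖ ≤ 1 → a + t • b ∈ Ω) →
      ∀ φ : ℝ → ℝ, Continuous φ →
        (∀ θ : ℝ, u (a + Complex.exp (θ * Complex.I) • b) ≤ ((φ θ : ℝ) : EReal)) →
        u a ≤ (((1 / (2 * Real.pi)) * ∫ θ in (0:ℝ)..(2 * Real.pi), φ θ : ℝ) : EReal)

/-- `exp : ℝ ∪ {-∞} → ℝ` with `exp(-∞) = 0`. -/
noncomputable def expE (x : EReal) : ℝ := if x = ⊥ then 0 else Real.exp x.toReal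

/-- A psh function is maximal on a set `S` if it dominates, on every relatively
compact open `ω ⊆ S`, any psh function on `ω` (usc up to the boundary) which it
dominates on `∂ω`. For locally bounded psh functions this is equivalent to the
vanishing of the Monge–Ampère measure `(dd^c φ)^n` on `S`. -/
def IsMaximalOn {n : ℕ} (φ : (Fin n → ℂ) → EReal) (S : Set (Fin n → ℂ)) : Prop :=
  ∀ ω : Set (Fin n → ℂ), IsOpen ω → IsCompact (closure ω) → closure ω ⊆ S →
    ∀ v : (Fin n → ℂ) → EReal, IsPSHOn v ω →
      UpperSemicontinuousOn v (closure ω) →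
      (∀ z ∈ frontier ω, v z ≤ φ z) → ∀ z ∈ ω, v z ≤ φ z

namespace Stmt13

abbrev Vec (n : ℕ) := Fin n → ℂ

lemma ereal_eq_bot_of_le_all {x : EReal} (hx : x ≠ ⊤) (h : ∀ r : ℝ, x ≤ (r : EReal)) :
    x = ⊥ := by
  by_contra hb
  have h2 := h (x.toReal - 1)
  nth_rewrite 1 [← EReal.coe_toReal hx hb] at h2
  exact absurd (EReal.coe_le_coe_iff.1 h2) (by linarith)

lemma usc_bound {n : ℕ} {f : Vec n → EReal} {U K : Set (Vec n)}
    (hf : UpperSemicontinuousOn f U) (hU : IsOpen U) (hK : IsCompact K) (hKU : K ⊆ U)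
    (hft : ∀ z, f z ≠ ⊤) : ∃ M : ℝ, ∀ z ∈ K, f z ≤ (M : EReal) := by
  classical
  set y : Vec n → ℝ := fun x => if h : f x = ⊥ then 0 else (f x).toReal + 1 with hy
  have hfy : ∀ x, f x < (y x : EReal) := by
    intro x
    by_cases h : f x = ⊥
    · simp [hy, h]
    · simp only [hy, h, dif_neg, not_false_iff]
      conv_lhs => rw [← EReal.coe_toReal (hft x) h]
      exact_mod_cast (by linarith : (f x).toReal < (f x).toReal + 1)
  have hnb : ∀ x ∈ K, {z | f z < (y x : EReal)} ∈ nhds x := by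
    intro x hx
    have h1 : nhdsWithin x U = nhds x := nhdsWithin_eq_nhds.2 (hU.mem_nhds (hKU hx))
    have h2 := hf x (hKU hx) (y x) (hfy x)
    rwa [h1] at h2
  obtain ⟨t, _, ht2⟩ := hK.elim_nhds_subcover (fun x => {z | f z < (y x : EReal)}) hnb
  rcases t.eq_empty_or_nonempty with rfl | hne
  · exact ⟨0, fun z hz => by simpa using ht2 hz⟩
  · refine ⟨t.sup' hne y, fun z hz => ?_⟩
    obtain ⟨x, hxt, hzx⟩ := Set.mem_iUnion₂.1 (ht2 hz)
    exact le_trans hzx.le (EReal.coe_le_coe_iff.2 (Finset.le_sup' y hxt))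

/-- norm of the circle parameter -/
lemma norm_circle (θ : ℝ) : ‖Complex.exp ((θ:ℂ) * Complex.I)‖ = 1 := by
  exact Complex.norm_exp_ofReal_mul_I θ

lemma norm_circle_sub_one_sq (θ : ℝ) :
    ‖Complex.exp ((θ:ℂ) * Complex.I) - 1‖ ^ 2 = 2 - 2 * Real.cos θ := by
  have h : Complex.exp ((θ:ℂ) * Complex.I) - 1
      = Complex.ofReal (Real.cos θ - 1) + Complex.ofReal (Real.sin θ) * Complex.I := by
    rw [Complex.exp_mul_I]
    push_cast
    ring
  rw [h, Complex.norm_add_mul_I, Real.sq_sqrt (by positivity)]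
  nlinarith [Real.sin_sq_add_cos_sq θ]

/-- If `u` is `⊥` on an arc of a circle (around `θ = 0` in the `cos` sense), then it is
`⊥` at the center. -/
lemma circ_bot {n : ℕ} {R : ℝ} (hR : 0 < R) {u : Vec n → EReal}
    (hu : IsPSHOn u (Metric.ball 0 R)) (hutop : ∀ z, u z ≠ ⊤)
    (c b : Vec n) (hcb : ‖c‖ + ‖b‖ < R) (η : ℝ) (hη0 : 0 < η) (hηπ : η ≤ Real.pi)
    (harc : ∀ θ : ℝ, Real.cos η < Real.cos θ → u (c + Complex.exp (θ * Complex.I) • b) = ⊥) :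
    u c = ⊥ := by
  have hπ := Real.pi_pos
  -- the disk is inside the ball
  have hdisk : ∀ t : ℂ, ‖t‖ ≤ 1 → c + t • b ∈ Metric.ball (0 : Vec n) R := by
    intro t ht
    rw [Metric.mem_ball, dist_zero_right]
    calc ‖c + t • b‖ ≤ ‖c‖ + ‖t • b‖ := norm_add_le _ _
      _ = ‖c‖ + ‖t‖ * ‖b‖ := by rw [norm_smul]
      _ ≤ ‖c‖ + 1 * ‖b‖ := by
          have := norm_nonneg b
          gcongr
      _ < R := by linarith
  -- a bound for u on the circle
  obtain ⟨M₀, hM₀⟩ := usc_bound (n := n) hu.1 Metric.isOpen_ball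
    (isCompact_closedBall (0 : Vec n) (‖c‖ + ‖b‖))
    (Metric.closedBall_subset_ball hcb) hutop
  set A := max M₀ 0 with hA
  have hA0 : 0 ≤ A := le_max_right _ _
  have hcirc : ∀ θ : ℝ, u (c + Complex.exp (θ * Complex.I) • b) ≤ (A : EReal) := by
    intro θ
    refine le_trans (hM₀ _ ?_) (EReal.coe_le_coe_iff.2 (le_max_left _ _))
    rw [Metric.mem_closedBall, dist_zero_right]
    calc ‖c + Complex.exp (θ * Complex.I) • b‖ ≤ ‖c‖ + ‖Complex.exp (θ * Complex.I) • b‖ :=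
        norm_add_le _ _
      _ = ‖c‖ + ‖b‖ := by rw [norm_smul, norm_circle, one_mul]
  -- the cut-off function
  set κ₀ := Real.cos η with hκ₀def
  have hκ₀1 : κ₀ < 1 := by
    have := Real.cos_lt_cos_of_nonneg_of_le_pi (le_refl 0) hηπ hη0
    simpa using this
  obtain ⟨κ₁, hκ₁def⟩ : ∃ κ₁ : ℝ, κ₁ = (Real.cos (η / 2) - κ₀) / (1 - κ₀) := ⟨_, rfl⟩
  have hκ₁0 : 0 < κ₁ := by
    rw [hκ₁def]
    apply div_pos _ (by linarith)
    have := Real.cos_lt_cos_of_nonneg_of_le_pi (x := η/2) (y := η) (by linarith) hηπ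
      (by linarith)
    linarith
  set g : ℝ → ℝ := fun θ => max 0 ((Real.cos θ - κ₀) / (1 - κ₀)) with hgdef
  have hgc : Continuous g := by
    apply continuous_const.max
    exact (Real.continuous_cos.sub continuous_const).div_const _
  have hg0 : ∀ θ, 0 ≤ g θ := fun θ => le_max_left _ _
  have hg1 : ∀ θ, g θ ≤ 1 := by
    intro θ
    apply max_le (by norm_num)
    rw [div_le_one (by linarith)]
    have := Real.cos_le_one θ
    linarith
  -- integral of g is bounded below
  set Ig := ∫ θ in (0:ℝ)..(2 * Real.pi), g θ with hIg
  have hIglb : κ₁ * (η / 2) ≤ Ig := by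
    have hint1 : IntervalIntegrable g volume 0 (η / 2) := (hgc.intervalIntegrable _ _)
    have hint2 : IntervalIntegrable g volume (η / 2) (2 * Real.pi) :=
      (hgc.intervalIntegrable _ _)
    have hsplit : (∫ θ in (0:ℝ)..(η/2), g θ) + ∫ θ in (η/2)..(2*Real.pi), g θ = Ig :=
      intervalIntegral.integral_add_adjacent_intervals hint1 hint2
    have h1 : κ₁ * (η / 2) ≤ ∫ θ in (0:ℝ)..(η/2), g θ := by
      have hmono : ∀ x ∈ Set.Icc (0:ℝ) (η/2), κ₁ ≤ g x := by
        intro x hx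
        have hx1 : Real.cos (η/2) ≤ Real.cos x := by
          rcases eq_or_lt_of_le hx.2 with h | h
          · rw [h]
          · exact (Real.cos_lt_cos_of_nonneg_of_le_pi (x := x) (y := η/2) hx.1
              (by linarith) h).le
        refine le_trans ?_ (le_max_right _ _)
        rw [hκ₁def]
        gcongr
      have := intervalIntegral.integral_mono_on (by linarith : (0:ℝ) ≤ η / 2)
        (intervalIntegrable_const (c := κ₁)) hint1 hmono
      rw [intervalIntegral.integral_const] at this
      simp only [smul_eq_mul, sub_zero] at this
      linarith
    have h2 : (0:ℝ) ≤ ∫ θ in (η/2)..(2*Real.pi), g θ := by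
      apply intervalIntegral.integral_nonneg (by linarith)
      intro x _
      exact hg0 x
    linarith
  -- the key estimate, for every M ≥ 0
  have hkey : ∀ M : ℝ, 0 ≤ M → u c ≤ ((A - (M + A) * Ig / (2 * Real.pi) : ℝ) : EReal) := by
    intro M hM
    set Φ : ℝ → ℝ := fun θ => A - (M + A) * g θ with hΦdef
    have hΦc : Continuous Φ := continuous_const.sub ((continuous_const.mul hgc))
    have hmaj : ∀ θ : ℝ, u (c + Complex.exp (θ * Complex.I) • b) ≤ ((Φ θ : ℝ) : EReal) := by
      intro θ
      rcases le_or_gt (Real.cos θ) κ₀ with h | h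
      · have hgz : g θ = 0 := by
          apply max_eq_left
          apply div_nonpos_of_nonpos_of_nonneg (by linarith) (by linarith)
        have : Φ θ = A := by rw [hΦdef]; simp [hgz]
        rw [this]
        exact hcirc θ
      · rw [harc θ h]
        exact bot_le
    have hmain := hu.2 c (by
        rw [Metric.mem_ball, dist_zero_right]
        have := norm_nonneg b
        linarith) b hdisk Φ hΦc hmaj
    refine le_trans hmain ?_
    apply EReal.coe_le_coe_iff.2
    -- compute the integral
    have hintg : IntervalIntegrable g volume 0 (2 * Real.pi) := hgc.intervalIntegrable _ _
    have hcalc : (∫ θ in (0:ℝ)..(2 * Real.pi), Φ θ)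
        = 2 * Real.pi * A - (M + A) * Ig := by
      simp only [hΦdef]
      rw [intervalIntegral.integral_sub (intervalIntegrable_const) (hintg.const_mul _),
        intervalIntegral.integral_const_mul, intervalIntegral.integral_const, ← hIg]
      simp only [smul_eq_mul, sub_zero]
    rw [hcalc]
    have h2π : (2 * Real.pi) ≠ 0 := by positivity
    have heq : (1 / (2 * Real.pi)) * (2 * Real.pi * A - (M + A) * Ig)
        = A - (M + A) * Ig / (2 * Real.pi) := by
      field_simp
    exact le_of_eq heq
  -- conclude
  apply ereal_eq_bot_of_le_all (hutop c)
  intro X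
  have hIg0 : 0 < κ₁ * (η / 2) := by positivity
  set M := max 0 ((A - X) * (2 * Real.pi) / (κ₁ * (η / 2))) with hMdef
  have hM0 : 0 ≤ M := le_max_left _ _
  refine le_trans (hkey M hM0) (EReal.coe_le_coe_iff.2 ?_)
  -- A - (M + A) * Ig / (2π) ≤ X
  have hIg' : κ₁ * (η/2) ≤ Ig := hIglb
  have hMA : (M + A) * (κ₁ * (η/2)) ≤ (M + A) * Ig := by
    apply mul_le_mul_of_nonneg_left hIg' (by linarith)
  have hM2 : (A - X) * (2 * Real.pi) / (κ₁ * (η / 2)) ≤ M := le_max_right _ _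
  have hM3 : (A - X) * (2 * Real.pi) ≤ M * (κ₁ * (η/2)) := by
    rw [div_le_iff₀ hIg0] at hM2
    linarith
  have h2π : (0:ℝ) < 2 * Real.pi := by positivity
  rw [sub_le_iff_le_add, div_eq_mul_inv]
  rw [← sub_le_iff_le_add']
  calc (A - X) = (A - X) * (2 * Real.pi) * (2 * Real.pi)⁻¹ := by field_simp
    _ ≤ M * (κ₁ * (η/2)) * (2 * Real.pi)⁻¹ := by gcongr
    _ ≤ (M + A) * Ig * (2 * Real.pi)⁻¹ := by
        have : M * (κ₁ * (η/2)) ≤ (M + A) * Ig := le_trans (by nlinarith) hMA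
        gcongr
  
lemma bot_dense {n : ℕ} {R : ℝ} (hR : 0 < R) {u : Vec n → EReal}
    (hu : IsPSHOn u (Metric.ball 0 R)) (hutop : ∀ z, u z ≠ ⊤)
    (hune : ∃ z ∈ Metric.ball (0 : Vec n) R, u z ≠ ⊥) :
    ∀ δ : ℝ, 0 < δ → ∃ z ∈ Metric.ball (0 : Vec n) δ, u z ≠ ⊥ := by
  by_contra hcon
  push_neg at hcon
  obtain ⟨δ, hδ0, hδbot⟩ := hcon
  obtain ⟨z₀, hz₀R, hz₀⟩ := hune
  have hz₀T : ‖z₀‖ < R := by rwa [Metric.mem_ball, dist_zero_right] at hz₀R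
  have hT0 : 0 ≤ ‖z₀‖ := norm_nonneg _
  obtain ⟨γ, hγdef⟩ : ∃ x : ℝ, x = (R - ‖z₀‖) / 4 := ⟨_, rfl⟩
  have hγ0 : 0 < γ := by rw [hγdef]; linarith
  have hγR : γ < R + 1 := by rw [hγdef]; linarith
  -- one propagation step
  have step : ∀ ρ : ℝ, 0 < ρ → (∀ w : Vec n, ‖w‖ < ρ → u w = ⊥) →
      ∀ cc : Vec n, ‖cc‖ ≤ (R + ρ) / 2 - γ → u cc = ⊥ := by
    intro ρ hρ hbot cc hcc
    rcases lt_or_ge ‖cc‖ ρ with h | h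
    · exact hbot cc h
    have hc0 : 0 < ‖cc‖ := lt_of_lt_of_le hρ h
    have hcR : ‖cc‖ ≤ R - 2 * γ := by linarith
    obtain ⟨γ₂, hγ₂def⟩ : ∃ x : ℝ, x = (3/4) * min γ ρ := ⟨_, rfl⟩
    have hminpos : 0 < min γ ρ := lt_min hγ0 hρ
    have hγ₂0 : 0 < γ₂ := by rw [hγ₂def]; linarith
    have hγ₂ρ : γ₂ < ρ := by
      rw [hγ₂def]
      have := min_le_right γ ρ
      linarith
    have hγ₂γ : γ₂ < γ := by
      rw [hγ₂def]
      have := min_le_left γ ρ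
      linarith
    set b := ((((ρ - γ₂) / ‖cc‖ - 1) : ℝ) • cc : Vec n) with hbdef
    have hfac : (ρ - γ₂) / ‖cc‖ ≤ 1 := (div_le_one hc0).2 (by linarith)
    have hb : ‖b‖ = ‖cc‖ - (ρ - γ₂) := by
      rw [hbdef, norm_smul, Real.norm_eq_abs, abs_of_nonpos (by linarith)]
      field_simp
      ring
    have hsum : ‖cc‖ + ‖b‖ < R := by rw [hb]; linarith
    have hbcc : ‖b‖ ≤ ‖cc‖ := by rw [hb]; linarith
    -- the arc parameter
    obtain ⟨κ, hκdef⟩ : ∃ x : ℝ, x = 1 - γ₂^2 / (16 * (R+1)^2) := ⟨_, rfl⟩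
    have hRp1 : (0:ℝ) < R + 1 := by linarith
    have hκ1 : κ < 1 := by
      rw [hκdef]
      have : 0 < γ₂^2 / (16*(R+1)^2) := by positivity
      linarith
    have hκm1 : -1 ≤ κ := by
      rw [hκdef]
      have h1 : γ₂ < R + 1 := lt_trans hγ₂γ hγR
      have h2 : γ₂^2 < (R+1)^2 := by nlinarith
      have h3 : γ₂^2 / (16*(R+1)^2) < 1 := by
        rw [div_lt_one (by positivity)]
        nlinarith [sq_nonneg (R+1)]
      linarith
    set η := Real.arccos κ with hηdef
    have hη0 : 0 < η := Real.arccos_pos.2 hκ1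
    have hηπ : η ≤ Real.pi := Real.arccos_le_pi κ
    have hcosη : Real.cos η = κ := Real.cos_arccos hκm1 hκ1.le
    apply circ_bot hR hu hutop cc b hsum η hη0 hηπ
    intro θ hθ
    apply hbot
    -- norm computation
    have hsplit : cc + Complex.exp ((θ:ℂ) * Complex.I) • b
        = (cc + b) + (Complex.exp ((θ:ℂ) * Complex.I) - 1) • b := by
      rw [sub_smul, one_smul]
      abel
    have hccb : ‖cc + b‖ = ρ - γ₂ := by
      have h1 : cc + b = (((ρ - γ₂) / ‖cc‖ : ℝ) • cc : Vec n) := by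
        rw [hbdef, sub_smul, one_smul]
        abel
      rw [h1, norm_smul, Real.norm_eq_abs, abs_of_nonneg (div_nonneg (by linarith) hc0.le)]
      field_simp
    have hedist : ‖(Complex.exp ((θ:ℂ) * Complex.I) - 1) • b‖ < γ₂ / 2 := by
      have hsq : ‖(Complex.exp ((θ:ℂ) * Complex.I) - 1) • b‖^2
          = (2 - 2 * Real.cos θ) * ‖b‖^2 := by
        rw [norm_smul, mul_pow, norm_circle_sub_one_sq]
      have hid : γ₂^2 / (8 * (R+1)^2) = 2 * (γ₂^2 / (16*(R+1)^2)) := by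
        field_simp
        ring
      have hcos : 2 - 2 * Real.cos θ < γ₂^2 / (8 * (R+1)^2) := by
        rw [hcosη, hκdef] at hθ
        rw [hid]
        linarith
      have hbR : ‖b‖ < R + 1 := by
        have : ‖cc‖ < R := by linarith
        linarith
      have hb2 : ‖b‖^2 < (R+1)^2 := by
        have := norm_nonneg b
        nlinarith
      have h20 : 0 ≤ 2 - 2 * Real.cos θ := by nlinarith [Real.cos_le_one θ]
      have hP : (0:ℝ) < (R+1)^2 := by positivity
      have s1 : (2 - 2*Real.cos θ) * ‖b‖^2 ≤ (2 - 2*Real.cos θ) * (R+1)^2 :=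
        mul_le_mul_of_nonneg_left hb2.le h20
      have s2 : (2 - 2*Real.cos θ) * (R+1)^2 < (γ₂^2 / (8 * (R+1)^2)) * (R+1)^2 :=
        mul_lt_mul_of_pos_right hcos hP
      have s3 : (γ₂^2 / (8 * (R+1)^2)) * (R+1)^2 = γ₂^2/8 := by
        field_simp
      have s4 : γ₂^2/8 ≤ (γ₂/2)^2 := by nlinarith [sq_nonneg γ₂]
      have hlt : ‖(Complex.exp ((θ:ℂ) * Complex.I) - 1) • b‖^2 < (γ₂/2)^2 := by
        rw [hsq]
        calc (2 - 2*Real.cos θ) * ‖b‖^2 ≤ (2 - 2*Real.cos θ) * (R+1)^2 := s1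
          _ < (γ₂^2 / (8 * (R+1)^2)) * (R+1)^2 := s2
          _ = γ₂^2/8 := s3
          _ ≤ (γ₂/2)^2 := s4
      exact lt_of_pow_lt_pow_left₀ 2 (by positivity) hlt
    rw [hsplit]
    calc ‖(cc + b) + (Complex.exp ((θ:ℂ) * Complex.I) - 1) • b‖
        ≤ ‖cc + b‖ + ‖(Complex.exp ((θ:ℂ) * Complex.I) - 1) • b‖ := norm_add_le _ _
      _ < (ρ - γ₂) + γ₂ / 2 := by rw [hccb]; gcongr
      _ < ρ := by linarith
  -- induction driver
  have main : ∀ k : ℕ, ∀ w : Vec n, ‖w‖ < min (‖z₀‖ + γ) (δ + k * (γ / 2)) → u w = ⊥ := by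
    intro k
    induction k with
    | zero =>
      intro w hw
      apply hδbot
      rw [Metric.mem_ball, dist_zero_right]
      have h1 := lt_of_lt_of_le hw (min_le_right _ _)
      push_cast at h1
      linarith
    | succ k ih =>
      intro w hw
      have hρpos : 0 < min (‖z₀‖ + γ) (δ + k * (γ / 2)) := by
        apply lt_min (by linarith)
        have : (0:ℝ) ≤ k * (γ/2) := by positivity
        linarith
      apply step (min (‖z₀‖ + γ) (δ + k * (γ / 2))) hρpos ih
      -- ‖w‖ ≤ (R + ρ)/2 - γ
      have hRT : R = ‖z₀‖ + 4 * γ := by rw [hγdef]; ring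
      rcases min_cases (‖z₀‖ + γ) (δ + k * (γ / 2)) with ⟨hmin, hcase⟩ | ⟨hmin, hcase⟩
      · -- ρ = ‖z₀‖ + γ
        rw [hmin]
        have h1 : min (‖z₀‖ + γ) (δ + (k+1 : ℕ) * (γ/2)) ≤ ‖z₀‖ + γ := min_le_left _ _
        have h2 : ‖w‖ < ‖z₀‖ + γ := lt_of_lt_of_le hw h1
        rw [hRT]
        linarith
      · -- ρ = δ + k γ/2 ≤ ‖z₀‖ + γ
        rw [hmin]
        have h1 : min (‖z₀‖ + γ) (δ + (k+1 : ℕ) * (γ/2)) ≤ δ + (k+1 : ℕ) * (γ/2) :=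
          min_le_right _ _
        have h2 : ‖w‖ < δ + (k+1 : ℕ) * (γ/2) := lt_of_lt_of_le hw h1
        push_cast at h2 ⊢
        rw [hRT]
        linarith
  -- choose k large
  obtain ⟨k, hk⟩ := exists_nat_gt ((‖z₀‖ + γ - δ) / (γ / 2))
  apply hz₀
  apply main k
  apply lt_min (by linarith)
  have h1 : (‖z₀‖ + γ - δ) < k * (γ/2) := by
    rw [div_lt_iff₀ (by linarith : (0:ℝ) < γ/2)] at hk
    linarith
  linarith

end Stmt13

/-- for a psh germ `u` (not identically `-∞`) and a maximal psh
weight `φ` (isolated singularity at `0`, `e^φ` continuous, maximal outside the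
origin, i.e. `(dd^c φ)^n = λ δ₀`), the relative type
`σ(u,φ) = sup { c ≥ 0 : u ≤ c φ + O(1) }` is finite and the supremum is
attained: `u ≤ σ(u,φ) φ + O(1)`. -/
theorem stmt_13 (n : ℕ) (hn : 0 < n) (R : ℝ) (hR : 0 < R)
    (u φ : (Fin n → ℂ) → EReal)
    (hu : IsPSHOn u (Metric.ball 0 R))
    (hutop : ∀ z, u z ≠ ⊤)
    (hune : ∃ z ∈ Metric.ball (0 : Fin n → ℂ) R, u z ≠ ⊥)
    (hφ : IsPSHOn φ (Metric.ball 0 R))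
    (hφtop : ∀ z, φ z ≠ ⊤)
    -- isolated singularity at the origin :
    (hφ0 : φ 0 = ⊥)
    (hφsing : ∀ z ∈ Metric.ball (0 : Fin n → ℂ) R, z ≠ 0 → φ z ≠ ⊥)
    -- `e^φ` is continuous :
    (hφcont : ContinuousOn (fun z => expE (φ z)) (Metric.ball 0 R))
    -- maximality outside the origin :
    (hφmax : IsMaximalOn φ (Metric.ball (0 : Fin n → ℂ) R \ {0})) :
    ∃ L : ℝ, 0 ≤ L ∧
      IsLUB {c : ℝ | 0 ≤ c ∧ ∃ C r : ℝ, 0 < r ∧ r ≤ R ∧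
        ∀ z ∈ Metric.ball (0 : Fin n → ℂ) r,
          u z ≤ ((c : ℝ) : EReal) * φ z + ((C : ℝ) : EReal)} L ∧
      ∃ C r : ℝ, 0 < r ∧ r ≤ R ∧
        ∀ z ∈ Metric.ball (0 : Fin n → ℂ) r,
          u z ≤ ((L : ℝ) : EReal) * φ z + ((C : ℝ) : EReal) := by
  classical
  have hπ := Real.pi_pos
  obtain ⟨ρ₁, hρ₁def⟩ : ∃ x : ℝ, x = R / 4 := ⟨_, rfl⟩
  obtain ⟨ρ₂, hρ₂def⟩ : ∃ x : ℝ, x = R / 2 := ⟨_, rfl⟩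
  have hρ₁0 : 0 < ρ₁ := by rw [hρ₁def]; linarith
  have hρ₂0 : 0 < ρ₂ := by rw [hρ₂def]; linarith
  have hρ₁₂ : ρ₁ < ρ₂ := by rw [hρ₁def, hρ₂def]; linarith
  have hρ₂R : ρ₂ < R := by rw [hρ₂def]; linarith
  have hρ₁R : ρ₁ < R := by linarith
  have hcbsub : Metric.closedBall (0 : Fin n → ℂ) ρ₂ ⊆ Metric.ball 0 R :=
    Metric.closedBall_subset_ball hρ₂R
  set ψ : (Fin n → ℂ) → ℝ := fun z => expE (φ z) with hψdef
  have hψcont : ContinuousOn ψ (Metric.ball 0 R) := hφcont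
  have hψ0 : ψ 0 = 0 := by simp only [hψdef, expE, hφ0, if_pos]
  have hψpos : ∀ z ∈ Metric.ball (0 : Fin n → ℂ) R, z ≠ 0 → 0 < ψ z := by
    intro z hz hz0
    have h1 := hφsing z hz hz0
    simp only [hψdef, expE, if_neg h1]
    exact Real.exp_pos _
  have hφval : ∀ z ∈ Metric.ball (0 : Fin n → ℂ) R, z ≠ 0 →
      φ z = ((Real.log (ψ z) : ℝ) : EReal) := by
    intro z hz hz0
    have h1 := hφsing z hz hz0
    have h3 : ψ z = Real.exp ((φ z).toReal) := by simp only [hψdef, expE, if_neg h1]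
    rw [h3, Real.log_exp]
    exact (EReal.coe_toReal (hφtop z) h1).symm
  -- compact sublevel sets
  set K : ℝ → Set (Fin n → ℂ) := fun s => {z | ‖z‖ ≤ ρ₂ ∧ ψ z ≤ s} with hKdef
  have hKeq : ∀ s, K s = Metric.closedBall (0 : Fin n → ℂ) ρ₂ ∩ ψ ⁻¹' (Set.Iic s) := by
    intro s
    ext z
    simp [hKdef, Metric.mem_closedBall, dist_zero_right]
  have hKclosed : ∀ s, IsClosed (K s) := by
    intro s
    rw [hKeq]
    exact (hψcont.mono hcbsub).preimage_isClosed_of_isClosed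
      Metric.isClosed_closedBall isClosed_Iic
  have hKcpt : ∀ s, IsCompact (K s) := by
    intro s
    apply (isCompact_closedBall (0 : Fin n → ℂ) ρ₂).of_isClosed_subset (hKclosed s)
    rw [hKeq]
    exact Set.inter_subset_left
  have hKcb : ∀ s, K s ⊆ Metric.closedBall (0 : Fin n → ℂ) ρ₂ := by
    intro s z hz
    rw [Metric.mem_closedBall, dist_zero_right]
    exact hz.1
  have hKball : ∀ s, K s ⊆ Metric.ball 0 R := fun s => (hKcb s).trans hcbsub
  -- annulus minimum
  have hann : ∀ a : ℝ, 0 < a → a ≤ ρ₂ → ∃ m : ℝ, 0 < m ∧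
      ∀ z : Fin n → ℂ, ‖z‖ ≤ ρ₂ → a ≤ ‖z‖ → m ≤ ψ z := by
    intro a ha0 haρ
    set A := Metric.closedBall (0 : Fin n → ℂ) ρ₂ \ Metric.ball 0 a with hAdef
    have hAcpt : IsCompact A := (isCompact_closedBall _ _).diff Metric.isOpen_ball
    have hAne : A.Nonempty := by
      have hne : Nonempty (Fin n) := ⟨⟨0, hn⟩⟩
      refine ⟨(fun _ => (((a + ρ₂) / 2 : ℝ) : ℂ)), ?_, ?_⟩
      · rw [Metric.mem_closedBall, dist_zero_right, pi_norm_const, Complex.norm_real,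
          Real.norm_eq_abs, abs_of_nonneg (by linarith)]
        linarith
      · rw [Metric.mem_ball, dist_zero_right, pi_norm_const, Complex.norm_real,
          Real.norm_eq_abs, abs_of_nonneg (by linarith)]
        push_neg
        linarith
    have hsubA : A ⊆ Metric.ball 0 R := fun z hz => hcbsub hz.1
    obtain ⟨zm, hzmA, hzmmin⟩ := hAcpt.exists_isMinOn hAne (hψcont.mono hsubA)
    rw [isMinOn_iff] at hzmmin
    refine ⟨ψ zm, ?_, ?_⟩
    · apply hψpos zm (hsubA hzmA)
      intro h0
      have h1 : zm ∈ Metric.ball (0 : Fin n → ℂ) a := by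
        rw [h0]
        exact Metric.mem_ball_self ha0
      exact hzmA.2 h1
    · intro z hz1 hz2
      apply hzmmin
      constructor
      · rw [Metric.mem_closedBall, dist_zero_right]; exact hz1
      · rw [Metric.mem_ball, dist_zero_right]; push_neg; exact hz2
  -- the sup function Λ
  obtain ⟨Mb, hMb⟩ := Stmt13.usc_bound hu.1 Metric.isOpen_ball
    (isCompact_closedBall (0 : Fin n → ℂ) ρ₂) hcbsub hutop
  set Λ : ℝ → EReal := fun s => sSup (u '' K s) with hΛdef
  have hΛle : ∀ s, ∀ z ∈ K s, u z ≤ Λ s := fun s z hz =>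
    le_sSup (Set.mem_image_of_mem u hz)
  have hΛtop : ∀ s, Λ s ≤ (Mb : EReal) := by
    intro s
    apply sSup_le
    rintro y ⟨z, hz, rfl⟩
    exact hMb z (hKcb s hz)
  have hΛnetop : ∀ s, Λ s ≠ ⊤ := fun s =>
    ne_top_of_le_ne_top (EReal.coe_ne_top Mb) (hΛtop s)
  have hΛmono : ∀ s s' : ℝ, s ≤ s' → Λ s ≤ Λ s' := by
    intro s s' hss
    apply sSup_le_sSup
    apply Set.image_mono
    intro z hz
    exact ⟨hz.1, hz.2.trans hss⟩
  have hbotd := Stmt13.bot_dense hR hu hutop hune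
  have hΛnebot : ∀ s : ℝ, 0 < s → Λ s ≠ ⊥ := by
    intro s hs
    have hcont0 : ContinuousAt ψ 0 :=
      hψcont.continuousAt (Metric.isOpen_ball.mem_nhds (Metric.mem_ball_self hR))
    have hpre : ψ ⁻¹' (Set.Iio s) ∈ nhds (0 : Fin n → ℂ) :=
      hcont0.preimage_mem_nhds (Iio_mem_nhds (by rw [hψ0]; exact hs))
    obtain ⟨ε, hε0, hεsub⟩ := Metric.mem_nhds_iff.1 hpre
    obtain ⟨z, hzball, hz⟩ := hbotd (min ε ρ₂) (lt_min hε0 hρ₂0)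
    have hznorm : ‖z‖ < min ε ρ₂ := by rwa [Metric.mem_ball, dist_zero_right] at hzball
    have hzK : z ∈ K s := by
      constructor
      · exact le_of_lt (lt_of_lt_of_le hznorm (min_le_right _ _))
      · have h1 : z ∈ ψ ⁻¹' (Set.Iio s) := by
          apply hεsub
          rw [Metric.mem_ball, dist_zero_right]
          exact lt_of_lt_of_le hznorm (min_le_left _ _)
        exact le_of_lt h1
    intro hbot
    exact hz (le_bot_iff.1 (hbot ▸ hΛle s z hzK))
  -- the threshold
  obtain ⟨sstar, hsstar0, hsstar⟩ := hann ρ₁ hρ₁0 (le_of_lt hρ₁₂)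
  have hKsub : ∀ s : ℝ, s < sstar → K s ⊆ Metric.ball 0 ρ₁ := by
    intro s hs z hz
    rw [Metric.mem_ball, dist_zero_right]
    by_contra hge
    push_neg at hge
    have := hsstar z hz.1 hge
    linarith [hz.2]
  obtain ⟨t₁, ht₁def⟩ : ∃ x : ℝ, x = Real.log sstar - 1 := ⟨_, rfl⟩
  obtain ⟨s₁, hs₁def⟩ : ∃ x : ℝ, x = Real.exp t₁ := ⟨_, rfl⟩
  have hs₁0 : 0 < s₁ := by rw [hs₁def]; exact Real.exp_pos _
  have hs₁lt : s₁ < sstar := by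
    rw [hs₁def, ht₁def]
    calc Real.exp (Real.log sstar - 1) < Real.exp (Real.log sstar) :=
          Real.exp_lt_exp.2 (by linarith)
      _ = sstar := Real.exp_log hsstar0
  set ℓ : ℝ → ℝ := fun t => (Λ (Real.exp t)).toReal with hℓdef
  have hℓeq : ∀ t : ℝ, Λ (Real.exp t) = ((ℓ t : ℝ) : EReal) := fun t =>
    (EReal.coe_toReal (hΛnetop _) (hΛnebot _ (Real.exp_pos t))).symm
  have hℓmono : ∀ t t' : ℝ, t ≤ t' → ℓ t ≤ ℓ t' := by
    intro t t' h
    have h2 := hΛmono _ _ (Real.exp_le_exp.2 h)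
    rw [hℓeq t, hℓeq t'] at h2
    exact EReal.coe_le_coe_iff.1 h2
  set q : ℝ → ℝ := fun t => (ℓ t₁ - ℓ t) / (t₁ - t) with hqdef
  have hq0 : ∀ t : ℝ, t < t₁ → 0 ≤ q t := by
    intro t ht
    apply div_nonneg _ (by linarith)
    linarith [hℓmono t t₁ ht.le]
  have hqmul : ∀ t : ℝ, t < t₁ → q t * (t₁ - t) = ℓ t₁ - ℓ t := by
    intro t ht
    simp only [hqdef]
    rw [div_mul_cancel₀ _ (by linarith : t₁ - t ≠ 0)]
  -- THE KEY SLOPE LEMMA via maximality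
  have key : ∀ t : ℝ, t < t₁ → ∀ ε : ℝ, 0 < ε → ∀ t' : ℝ, t < t' → t' < t₁ →
      ℓ t' ≤ (q t + ε) * t' + (ℓ t - (q t + ε) * t) := by
    intro t ht ε hε t' htt' ht'
    obtain ⟨cε, hcεdef⟩ : ∃ x : ℝ, x = q t + ε := ⟨_, rfl⟩
    have hcε : 0 < cε := by rw [hcεdef]; linarith [hq0 t ht]
    obtain ⟨β, hβdef⟩ : ∃ x : ℝ, x = ℓ t - cε * t := ⟨_, rfl⟩
    obtain ⟨s₀, hs₀def⟩ : ∃ x : ℝ, x = Real.exp t := ⟨_, rfl⟩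
    have hs₀0 : 0 < s₀ := by rw [hs₀def]; exact Real.exp_pos _
    have hs₀1 : s₀ < s₁ := by
      rw [hs₀def, hs₁def]
      exact Real.exp_lt_exp.2 ht
    -- the domain ω
    set ω : Set (Fin n → ℂ) := {z | ‖z‖ < ρ₂ ∧ s₀ < ψ z ∧ ψ z < s₁} with hωdef
    have hωeq : ω = Metric.ball (0 : Fin n → ℂ) ρ₂ ∩ ψ ⁻¹' (Set.Ioo s₀ s₁) := by
      ext z
      simp [hωdef, Metric.mem_ball, dist_zero_right, and_assoc]
    have hωopen : IsOpen ω := by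
      rw [hωeq]
      exact (hψcont.mono (Metric.ball_subset_ball hρ₂R.le)).isOpen_inter_preimage
        Metric.isOpen_ball isOpen_Ioo
    set C : Set (Fin n → ℂ) := {z | ‖z‖ ≤ ρ₂ ∧ s₀ ≤ ψ z ∧ ψ z ≤ s₁} with hCdef
    have hCeq : C = Metric.closedBall (0 : Fin n → ℂ) ρ₂ ∩ ψ ⁻¹' (Set.Icc s₀ s₁) := by
      ext z
      simp [hCdef, Metric.mem_closedBall, dist_zero_right, and_assoc]
    have hCclosed : IsClosed C := by
      rw [hCeq]
      exact (hψcont.mono hcbsub).preimage_isClosed_of_isClosed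
        Metric.isClosed_closedBall isClosed_Icc
    have hωC : ω ⊆ C := fun z hz => ⟨hz.1.le, hz.2.1.le, hz.2.2.le⟩
    have hclC : closure ω ⊆ C := closure_minimal hωC hCclosed
    have hCK : C ⊆ K s₁ := fun z hz => ⟨hz.1, hz.2.2⟩
    have hCρ₁ : C ⊆ Metric.ball 0 ρ₁ := fun z hz => hKsub s₁ hs₁lt (hCK hz)
    have hCne0 : ∀ z ∈ C, z ≠ 0 := by
      intro z hz h0
      have h1 := hz.2.1
      rw [h0, hψ0] at h1
      linarith
    have hclcpt : IsCompact (closure ω) := by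
      apply (isCompact_closedBall (0 : Fin n → ℂ) ρ₂).of_isClosed_subset isClosed_closure
      intro z hz
      rw [Metric.mem_closedBall, dist_zero_right]
      exact (hclC hz).1
    have hclsub : closure ω ⊆ Metric.ball (0 : Fin n → ℂ) R \ {0} := by
      intro z hz
      refine ⟨Metric.ball_subset_ball hρ₁R.le (hCρ₁ (hclC hz)), ?_⟩
      simp only [Set.mem_singleton_iff]
      exact hCne0 z (hclC hz)
    have hωball : ω ⊆ Metric.ball (0 : Fin n → ℂ) R := fun z hz =>
      Metric.ball_subset_ball hρ₁R.le (hCρ₁ (hωC hz))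
    have hfront : ∀ z ∈ frontier ω, ψ z = s₀ ∨ ψ z = s₁ := by
      intro z hz
      have hzc : z ∈ C := hclC (frontier_subset_closure hz)
      have hznω : z ∉ ω := by
        rw [hωopen.frontier_eq] at hz
        exact hz.2
      have hρ : ‖z‖ < ρ₂ := by
        have h2 : z ∈ Metric.ball (0 : Fin n → ℂ) ρ₁ := hCρ₁ hzc
        rw [Metric.mem_ball, dist_zero_right] at h2
        linarith
      by_contra hcon
      push_neg at hcon
      apply hznω
      exact ⟨hρ, lt_of_le_of_ne hzc.2.1 (Ne.symm hcon.1),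
        lt_of_le_of_ne hzc.2.2 hcon.2⟩
    -- the comparison function v
    set v : (Fin n → ℂ) → EReal := fun z =>
      if u z = ⊥ then (⊥ : EReal) else ((((u z).toReal - β) / cε : ℝ) : EReal) with hvdef
    have hvlt : ∀ (z : Fin n → ℂ) (Y : ℝ),
        v z < (Y : EReal) ↔ u z < ((cε * Y + β : ℝ) : EReal) := by
      intro z Y
      by_cases hz : u z = ⊥
      · apply iff_of_true
        · simp only [hvdef, if_pos hz]
          exact EReal.bot_lt_coe _
        · rw [hz]
          exact EReal.bot_lt_coe _
      · simp only [hvdef, if_neg hz]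
        conv_rhs => rw [← EReal.coe_toReal (hutop z) hz]
        rw [EReal.coe_lt_coe_iff, EReal.coe_lt_coe_iff, div_lt_iff₀ hcε]
        constructor <;> intro <;> linarith
    have hvle : ∀ (z : Fin n → ℂ) (Y : ℝ),
        v z ≤ (Y : EReal) ↔ u z ≤ ((cε * Y + β : ℝ) : EReal) := by
      intro z Y
      by_cases hz : u z = ⊥
      · apply iff_of_true
        · simp only [hvdef, if_pos hz]
          exact bot_le
        · rw [hz]
          exact bot_le
      · simp only [hvdef, if_neg hz]
        conv_rhs => rw [← EReal.coe_toReal (hutop z) hz]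
        rw [EReal.coe_le_coe_iff, EReal.coe_le_coe_iff, div_le_iff₀ hcε]
        constructor <;> intro <;> linarith
    have hvusc : UpperSemicontinuousOn v (Metric.ball (0 : Fin n → ℂ) R) := by
      intro x hx y hy
      induction y using EReal.rec with
      | bot => exact absurd hy (by simp)
      | coe Y =>
        have h1 : u x < ((cε * Y + β : ℝ) : EReal) := (hvlt x Y).1 hy
        exact (hu.1 x hx _ h1).mono (fun z hz => (hvlt z Y).2 hz)
      | top =>
        apply Filter.Eventually.of_forall
        intro z
        by_cases hz : u z = ⊥
        · simp [hvdef, hz]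
        · simp only [hvdef, if_neg hz]
          exact EReal.coe_lt_top _
    have hvsub : ∀ a ∈ ω, ∀ bb : Fin n → ℂ, (∀ t0 : ℂ, ‖t0‖ ≤ 1 → a + t0 • bb ∈ ω) →
        ∀ Φ : ℝ → ℝ, Continuous Φ →
        (∀ θ : ℝ, v (a + Complex.exp (θ * Complex.I) • bb) ≤ ((Φ θ : ℝ) : EReal)) →
        v a ≤ (((1 / (2 * Real.pi)) * ∫ θ in (0:ℝ)..(2 * Real.pi), Φ θ : ℝ) : EReal) := by
      intro a ha bb hdisk Φ hΦc hmaj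
      have hmaj' : ∀ θ : ℝ, u (a + Complex.exp (θ * Complex.I) • bb)
          ≤ ((cε * Φ θ + β : ℝ) : EReal) := fun θ => (hvle _ _).1 (hmaj θ)
      have h2 := hu.2 a (hωball ha) bb (fun t0 ht0 => hωball (hdisk t0 ht0))
        (fun θ => cε * Φ θ + β) ((continuous_const.mul hΦc).add continuous_const) hmaj'
      have hint : (∫ θ in (0:ℝ)..(2 * Real.pi), (cε * Φ θ + β))
          = cε * (∫ θ in (0:ℝ)..(2 * Real.pi), Φ θ) + 2 * Real.pi * β := by
        rw [intervalIntegral.integral_add ((hΦc.intervalIntegrable _ _).const_mul cε)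
          (intervalIntegrable_const), intervalIntegral.integral_const_mul,
          intervalIntegral.integral_const]
        simp only [smul_eq_mul, sub_zero]
      have h3 : (1 / (2 * Real.pi)) * (∫ θ in (0:ℝ)..(2 * Real.pi), (cε * Φ θ + β))
          = cε * ((1 / (2 * Real.pi)) * ∫ θ in (0:ℝ)..(2 * Real.pi), Φ θ) + β := by
        rw [hint]
        field_simp
      rw [h3] at h2
      exact (hvle _ _).2 h2
    have hvφ : ∀ z ∈ frontier ω, v z ≤ φ z := by
      intro z hz
      have hzc : z ∈ C := hclC (frontier_subset_closure hz)
      have hzR : z ∈ Metric.ball (0 : Fin n → ℂ) R :=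
        Metric.ball_subset_ball hρ₁R.le (hCρ₁ hzc)
      have hz0 : z ≠ 0 := hCne0 z hzc
      have hφz : φ z = ((Real.log (ψ z) : ℝ) : EReal) := hφval z hzR hz0
      rcases hfront z hz with h | h
      · rw [hφz, h, hs₀def, Real.log_exp]
        apply (hvle z t).2
        have h1 : u z ≤ Λ s₀ := hΛle s₀ z ⟨hzc.1, le_of_eq h⟩
        rw [hs₀def] at h1
        rw [hℓeq t] at h1
        refine le_trans h1 (EReal.coe_le_coe_iff.2 ?_)
        rw [hβdef]
        linarith
      · rw [hφz, h, hs₁def, Real.log_exp]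
        apply (hvle z t₁).2
        have h1 : u z ≤ Λ s₁ := hΛle s₁ z ⟨hzc.1, le_of_eq h⟩
        rw [hs₁def] at h1
        rw [hℓeq t₁] at h1
        refine le_trans h1 (EReal.coe_le_coe_iff.2 ?_)
        have hqm := hqmul t ht
        have hpos : 0 < ε * (t₁ - t) := mul_pos hε (by linarith)
        rw [hβdef, hcεdef]
        nlinarith [hqm]
    have hconc := hφmax ω hωopen hclcpt hclsub v ⟨hvusc.mono hωball, hvsub⟩
      (hvusc.mono (fun z hz => Metric.ball_subset_ball hρ₁R.le (hCρ₁ (hclC hz)))) hvφ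
    -- conclude the slope bound
    have hΛs' : Λ (Real.exp t') ≤ ((cε * t' + β : ℝ) : EReal) := by
      apply sSup_le
      rintro y ⟨z, hz, rfl⟩
      rcases le_or_gt (ψ z) s₀ with hc | hc
      · have h1 : u z ≤ Λ s₀ := hΛle s₀ z ⟨hz.1, hc⟩
        rw [hs₀def, hℓeq t] at h1
        refine le_trans h1 (EReal.coe_le_coe_iff.2 ?_)
        have : cε * t ≤ cε * t' := mul_le_mul_of_nonneg_left htt'.le hcε.le
        rw [hβdef]
        linarith
      · have hzω : z ∈ ω := by
          refine ⟨?_, hc, lt_of_le_of_lt hz.2 (by rw [hs₁def]; exact Real.exp_lt_exp.2 ht')⟩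
          have h2 : z ∈ Metric.ball (0 : Fin n → ℂ) ρ₁ := by
            apply hKsub (Real.exp t') _ hz
            calc Real.exp t' < s₁ := by rw [hs₁def]; exact Real.exp_lt_exp.2 ht'
              _ < sstar := hs₁lt
          rw [Metric.mem_ball, dist_zero_right] at h2
          linarith
        have h3 := hconc z hzω
        have hz0 : z ≠ 0 := by
          intro h0
          rw [h0, hψ0] at hc
          linarith
        have hφz : φ z = ((Real.log (ψ z) : ℝ) : EReal) := hφval z (hωball hzω) hz0
        rw [hφz] at h3
        have h4 : u z ≤ ((cε * Real.log (ψ z) + β : ℝ) : EReal) := (hvle _ _).1 h3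
        refine le_trans h4 (EReal.coe_le_coe_iff.2 ?_)
        have h5 : Real.log (ψ z) ≤ t' := by
          rw [Real.log_le_iff_le_exp (hψpos z (hωball hzω) hz0)]
          exact hz.2
        have : cε * Real.log (ψ z) ≤ cε * t' := mul_le_mul_of_nonneg_left h5 hcε.le
        linarith
    rw [hℓeq t'] at hΛs'
    have := EReal.coe_le_coe_iff.1 hΛs'
    rw [hcεdef, hβdef, hcεdef] at this
    linarith
  -- monotonicity of the difference quotients (convexity)
  have hqmono : ∀ t t' : ℝ, t < t' → t' < t₁ → q t ≤ q t' := by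
    intro t t' htt' ht'
    have ht : t < t₁ := htt'.trans ht'
    have hstep : ℓ t' ≤ ℓ t + q t * (t' - t) := by
      apply le_of_forall_pos_le_add
      intro ε hε
      have h2 := key t ht (ε / (t' - t)) (div_pos hε (by linarith)) t' htt' ht'
      have h3 : (q t + ε / (t' - t)) * t' + (ℓ t - (q t + ε / (t' - t)) * t)
          = ℓ t + q t * (t' - t) + ε := by
        have hne : t' - t ≠ 0 := ne_of_gt (by linarith)
        field_simp
        ring
      rw [h3] at h2
      exact h2
    have h4 : q t * (t₁ - t) = ℓ t₁ - ℓ t := hqmul t ht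
    have h5 : q t' * (t₁ - t') = ℓ t₁ - ℓ t' := hqmul t' ht'
    have h6 : q t * (t₁ - t') ≤ q t' * (t₁ - t') := by nlinarith
    exact le_of_mul_le_mul_right h6 (by linarith)
  -- the candidate type L
  set Q : Set ℝ := q '' (Set.Iio t₁) with hQdef
  have hQne : Q.Nonempty :=
    ⟨q (t₁ - 1), Set.mem_image_of_mem _ (Set.mem_Iio.2 (by linarith))⟩
  have hQbdd : BddBelow Q := by
    refine ⟨0, ?_⟩
    rintro y ⟨t, ht, rfl⟩
    exact hq0 t ht
  set L := sInf Q with hLdef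
  have hL0 : 0 ≤ L := le_csInf hQne (by rintro y ⟨t, ht, rfl⟩; exact hq0 t ht)
  have hLle : ∀ t : ℝ, t < t₁ → L ≤ q t := fun t ht =>
    csInf_le hQbdd (Set.mem_image_of_mem _ ht)
  have hℓbound : ∀ t : ℝ, t < t₁ → ℓ t ≤ L * t + (ℓ t₁ - L * t₁) := by
    intro t ht
    have h1 := hqmul t ht
    have h2 : L * (t₁ - t) ≤ q t * (t₁ - t) :=
      mul_le_mul_of_nonneg_right (hLle t ht) (by linarith)
    nlinarith
  obtain ⟨C₁, hC₁def⟩ : ∃ x : ℝ, x = ℓ t₁ - L * t₁ := ⟨_, rfl⟩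
  -- a radius on which the attainment holds
  have hcont0 : ContinuousAt ψ 0 :=
    hψcont.continuousAt (Metric.isOpen_ball.mem_nhds (Metric.mem_ball_self hR))
  have hpre : ψ ⁻¹' (Set.Iio s₁) ∈ nhds (0 : Fin n → ℂ) :=
    hcont0.preimage_mem_nhds (Iio_mem_nhds (by rw [hψ0]; exact hs₁0))
  obtain ⟨ε₁, hε₁0, hε₁sub⟩ := Metric.mem_nhds_iff.1 hpre
  obtain ⟨r₁, hr₁def⟩ : ∃ x : ℝ, x = min ε₁ ρ₁ := ⟨_, rfl⟩
  have hr₁0 : 0 < r₁ := by rw [hr₁def]; exact lt_min hε₁0 hρ₁0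
  have hr₁R : r₁ ≤ R := by
    rw [hr₁def]
    calc min ε₁ ρ₁ ≤ ρ₁ := min_le_right _ _
      _ ≤ R := hρ₁R.le
  have h0K : ∀ s : ℝ, 0 ≤ s → (0 : Fin n → ℂ) ∈ K s := by
    intro s hs
    constructor
    · simp only [norm_zero]
      exact hρ₂0.le
    · rw [hψ0]
      exact hs
  -- the attainment
  have hmem : ∀ z ∈ Metric.ball (0 : Fin n → ℂ) r₁,
      u z ≤ ((L : ℝ) : EReal) * φ z + ((C₁ : ℝ) : EReal) := by
    intro z hz
    have hznorm : ‖z‖ < r₁ := by rwa [Metric.mem_ball, dist_zero_right] at hz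
    have hzR : z ∈ Metric.ball (0 : Fin n → ℂ) R := by
      rw [Metric.mem_ball, dist_zero_right]
      linarith
    have hψz1 : ψ z < s₁ := by
      have h1 : z ∈ ψ ⁻¹' (Set.Iio s₁) := by
        apply hε₁sub
        rw [Metric.mem_ball, dist_zero_right]
        refine lt_of_lt_of_le hznorm ?_
        rw [hr₁def]
        exact min_le_left _ _
      exact h1
    by_cases hz0 : z = 0
    · subst hz0
      rw [hφ0]
      rcases eq_or_lt_of_le hL0 with hL | hL
      · rw [← hL, EReal.coe_zero, zero_mul, zero_add]
        have h1 : u 0 ≤ Λ s₁ := hΛle s₁ 0 (h0K s₁ hs₁0.le)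
        rw [hs₁def, hℓeq t₁] at h1
        have h2 : C₁ = ℓ t₁ := by rw [hC₁def, ← hL]; ring
        rw [h2]
        exact h1
      · have hu0 : u 0 = ⊥ := by
          apply Stmt13.ereal_eq_bot_of_le_all (hutop 0)
          intro X
          obtain ⟨t0, ht0def⟩ : ∃ x : ℝ, x = min ((X - C₁) / L) (t₁ - 1) := ⟨_, rfl⟩
          have ht01 : t0 < t₁ := by
            rw [ht0def]
            calc min ((X - C₁) / L) (t₁ - 1) ≤ t₁ - 1 := min_le_right _ _
              _ < t₁ := by linarith
          have h1 : u 0 ≤ Λ (Real.exp t0) :=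
            hΛle _ 0 (h0K _ (Real.exp_pos _).le)
          rw [hℓeq t0] at h1
          refine le_trans h1 (EReal.coe_le_coe_iff.2 ?_)
          have h2 := hℓbound t0 ht01
          have h3 : L * t0 ≤ X - C₁ := by
            have h4 : t0 ≤ (X - C₁) / L := by rw [ht0def]; exact min_le_left _ _
            rw [le_div_iff₀ hL] at h4
            linarith [h4]
          rw [hC₁def] at h3
          linarith [h2, h3]
        rw [hu0]
        exact bot_le
    · have hψz0 : 0 < ψ z := hψpos z hzR hz0
      obtain ⟨tz, htzdef⟩ : ∃ x : ℝ, x = Real.log (ψ z) := ⟨_, rfl⟩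
      have htz1 : tz < t₁ := by
        rw [htzdef]
        calc Real.log (ψ z) < Real.log s₁ := Real.log_lt_log hψz0 hψz1
          _ = t₁ := by rw [hs₁def, Real.log_exp]
      have hzK : z ∈ K (Real.exp tz) := by
        constructor
        · have h5 : ‖z‖ < ρ₁ := by
            refine lt_of_lt_of_le hznorm ?_
            rw [hr₁def]
            exact min_le_right _ _
          linarith
        · rw [htzdef, Real.exp_log hψz0]
      have h1 : u z ≤ Λ (Real.exp tz) := hΛle _ z hzK
      rw [hℓeq tz] at h1
      have h2 : ℓ tz ≤ L * tz + C₁ := by rw [hC₁def]; exact hℓbound tz htz1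
      have hφz : φ z = ((tz : ℝ) : EReal) := by rw [hφval z hzR hz0, htzdef]
      rw [hφz]
      calc u z ≤ ((ℓ tz : ℝ) : EReal) := h1
        _ ≤ ((L * tz + C₁ : ℝ) : EReal) := EReal.coe_le_coe_iff.2 h2
        _ = ((L : ℝ) : EReal) * ((tz : ℝ) : EReal) + ((C₁ : ℝ) : EReal) := by
            rw [← EReal.coe_mul, ← EReal.coe_add]
  -- L is an upper bound for the set of admissible constants
  have hub : ∀ c : ℝ, (0 ≤ c ∧ ∃ C r : ℝ, 0 < r ∧ r ≤ R ∧
      ∀ z ∈ Metric.ball (0 : Fin n → ℂ) r,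
        u z ≤ ((c : ℝ) : EReal) * φ z + ((C : ℝ) : EReal)) → c ≤ L := by
    rintro c ⟨hc0, C, r, hr0, hrR, hcr⟩
    obtain ⟨m, hm0, hmann⟩ := hann (min (r / 2) ρ₁) (lt_min (by linarith) hρ₁0)
      ((min_le_right _ _).trans hρ₁₂.le)
    have hcap : ∀ s : ℝ, s < m → K s ⊆ Metric.ball 0 r := by
      intro s hs z hz
      rw [Metric.mem_ball, dist_zero_right]
      by_contra hge
      push_neg at hge
      have h2 : min (r / 2) ρ₁ ≤ ‖z‖ :=
        le_trans (le_trans (min_le_left _ _) (by linarith)) hge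
      have := hmann z hz.1 h2
      linarith [hz.2]
    have hℓc : ∀ t : ℝ, Real.exp t < m → ℓ t ≤ c * t + C := by
      intro t htm
      have hΛb : Λ (Real.exp t) ≤ ((c * t + C : ℝ) : EReal) := by
        apply sSup_le
        rintro y ⟨z, hz, rfl⟩
        have hzr : z ∈ Metric.ball (0 : Fin n → ℂ) r := hcap _ htm hz
        have h3 := hcr z hzr
        by_cases hz0 : z = 0
        · subst hz0
          rw [hφ0] at h3
          rcases eq_or_lt_of_le hc0 with hc | hc
          · rw [← hc] at h3 ⊢
            rw [EReal.coe_zero, zero_mul, zero_add] at h3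
            simpa using h3
          · rw [EReal.coe_mul_bot_of_pos hc, EReal.bot_add] at h3
            exact le_trans h3 bot_le
        · have hzRR : z ∈ Metric.ball (0 : Fin n → ℂ) R :=
            Metric.ball_subset_ball hrR hzr
          have hψz0 : 0 < ψ z := hψpos z hzRR hz0
          have hφz : φ z = ((Real.log (ψ z) : ℝ) : EReal) := hφval z hzRR hz0
          have h5 : Real.log (ψ z) ≤ t := by
            rw [Real.log_le_iff_le_exp hψz0]
            exact hz.2
          have h6 : c * Real.log (ψ z) ≤ c * t := mul_le_mul_of_nonneg_left h5 hc0
          rw [hφz] at h3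
          calc u z ≤ ((c : ℝ) : EReal) * ((Real.log (ψ z) : ℝ) : EReal)
                + ((C : ℝ) : EReal) := h3
            _ = ((c * Real.log (ψ z) + C : ℝ) : EReal) := by
                rw [← EReal.coe_mul, ← EReal.coe_add]
            _ ≤ ((c * t + C : ℝ) : EReal) := EReal.coe_le_coe_iff.2 (by linarith)
      rw [hℓeq t] at hΛb
      exact EReal.coe_le_coe_iff.1 hΛb
    have hcq : ∀ t' : ℝ, t' < t₁ → c ≤ q t' := by
      intro t' ht'
      apply le_of_forall_pos_le_add
      intro δ hδ0
      obtain ⟨t0, ht0def⟩ : ∃ x : ℝ,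
          x = min (min (t' - 1) (Real.log m - 1)) (t₁ - (C + c * t₁ - ℓ t₁) / δ - 1) :=
        ⟨_, rfl⟩
      have h1 : t0 < t' := by
        rw [ht0def]
        calc min (min (t' - 1) (Real.log m - 1)) (t₁ - (C + c * t₁ - ℓ t₁) / δ - 1)
            ≤ min (t' - 1) (Real.log m - 1) := min_le_left _ _
          _ ≤ t' - 1 := min_le_left _ _
          _ < t' := by linarith
      have ht01 : t0 < t₁ := lt_trans h1 ht'
      have h2 : Real.exp t0 < m := by
        have h2a : t0 ≤ Real.log m - 1 := by
          rw [ht0def]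
          exact le_trans (min_le_left _ _) (min_le_right _ _)
        calc Real.exp t0 ≤ Real.exp (Real.log m - 1) := Real.exp_le_exp.2 h2a
          _ < Real.exp (Real.log m) := Real.exp_lt_exp.2 (by linarith)
          _ = m := Real.exp_log hm0
      have h3 : (C + c * t₁ - ℓ t₁) / δ ≤ t₁ - t0 := by
        have h3a : t0 ≤ t₁ - (C + c * t₁ - ℓ t₁) / δ - 1 := by
          rw [ht0def]
          exact min_le_right _ _
        linarith
      have h4 : ℓ t0 ≤ c * t0 + C := hℓc t0 h2
      have h5 : q t0 ≤ q t' := hqmono t0 t' h1 ht'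
      have h7 := hqmul t0 ht01
      have h8 : C + c * t₁ - ℓ t₁ ≤ δ * (t₁ - t0) := by
        rw [div_le_iff₀ hδ0] at h3
        linarith
      have h9 : (c - δ) * (t₁ - t0) ≤ q t0 * (t₁ - t0) := by nlinarith
      have h10 : c - δ ≤ q t0 := le_of_mul_le_mul_right h9 (by linarith)
      linarith
    apply le_csInf hQne
    rintro y ⟨t', ht', rfl⟩
    exact hcq t' ht'
  refine ⟨L, hL0, ⟨?_, ?_⟩, C₁, r₁, hr₁0, hr₁R, hmem⟩
  · intro c hc
    exact hub c hc
  · intro b hb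
    exact hb ⟨hL0, C₁, r₁, hr₁0, hr₁R, hmem⟩
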